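/- For all n, k ≥ 0, the q-Narayana number N_q(n,k) = Σ_{w ∈ D_n, des(w)=k} q^{maj(w)} equals the Schur polynomial s_{⟨2^k⟩}(q, q^2, ..., q^{n-1}), where ⟨2^k⟩ is the partition with k parts equal to 2. -/

import Mathlib

open scoped Classical

open Finset

/-- The `i`-th letter (1-indexed) of a word `w`; `true` = vertical step `v`,
`false` = horizontal step `h`; junk value `false` out of range. -/
def ltr {m : ℕ} (w : Fin m → Bool) (i : ℕ) : Bool :=
  if h : 1 ≤ i ∧ i ≤ m then w ⟨i - 1, by omega⟩ else false

/-- The number of occurrences of the letter `b` among the first `i` letters of `w`. -/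
def pcnt {m : ℕ} (w : Fin m → Bool) (b : Bool) (i : ℕ) : ℕ :=
  ((Finset.Icc 1 i).filter fun j => ltr w j = b).card

/-- `w` is a Dyck path of length `2n`: `n` vertical steps and every prefix has at
least as many `v`'s as `h`'s. -/
def IsDyck (n : ℕ) (w : Fin (2 * n) → Bool) : Prop :=
  pcnt w true (2 * n) = n ∧ ∀ i ≤ 2 * n, pcnt w false i ≤ pcnt w true i

/-- The descent (valley) set of `w`: positions `i` with `w_i = h`, `w_{i+1} = v`. -/
def Des {n : ℕ} (w : Fin (2 * n) → Bool) : Finset ℕ :=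
  (Finset.Icc 1 (2 * n - 1)).filter fun i => ltr w i = false ∧ ltr w (i + 1) = true

lemma pcnt_zero {m : ℕ} (w : Fin m → Bool) (b : Bool) : pcnt w b 0 = 0 := by
  simp [pcnt]

lemma pcnt_succ {m : ℕ} (w : Fin m → Bool) (b : Bool) (i : ℕ) :
    pcnt w b (i + 1) = pcnt w b i + (if ltr w (i + 1) = b then 1 else 0) := by
  unfold pcnt
  rw [show Finset.Icc 1 (i + 1) = insert (i + 1) (Finset.Icc 1 i) by
    rw [Finset.insert_Icc_right_eq_Icc_add_one (by omega)]]
  rw [Finset.filter_insert]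
  split
  · rw [Finset.card_insert_of_notMem (by simp)]
  · simp

lemma pcnt_mono {m : ℕ} (w : Fin m → Bool) (b : Bool) {i j : ℕ} (h : i ≤ j) :
    pcnt w b i ≤ pcnt w b j := by
  induction j with
  | zero =>
    have : i = 0 := by omega
    subst this; exact le_rfl
  | succ j ih =>
    rcases Nat.lt_or_ge i (j+1) with h' | h'
    · rw [pcnt_succ]; have := ih (by omega); split <;> omega
    · have : i = j + 1 := by omega
      subst this; exact le_refl _

lemma pcnt_add {m : ℕ} (w : Fin m → Bool) (i : ℕ) :
    pcnt w true i + pcnt w false i = i := by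
  unfold pcnt
  have := Finset.card_filter_add_card_filter_not (s := Finset.Icc 1 i)
    (p := fun j => ltr w j = true)
  simp only [Bool.not_eq_true] at this
  rw [Nat.card_Icc, Nat.add_sub_cancel] at this
  convert this using 2

lemma pcnt_strict {m : ℕ} (w : Fin m → Bool) (b : Bool) {j : ℕ} (h1 : 1 ≤ j)
    (h : ltr w j = b) : pcnt w b (j - 1) + 1 = pcnt w b j := by
  obtain ⟨j, rfl⟩ : ∃ j', j = j' + 1 := ⟨j - 1, by omega⟩
  rw [pcnt_succ, if_pos h]; simp

lemma pcnt_const {m : ℕ} (w : Fin m → Bool) (b : Bool) {u p : ℕ} (hup : u ≤ p)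
    (h : ∀ q, u < q → q ≤ p → ltr w q ≠ b) : pcnt w b p = pcnt w b u := by
  induction p with
  | zero =>
    have : u = 0 := by omega
    subst this; rfl
  | succ p ih =>
    rcases Nat.lt_or_ge u (p+1) with h' | h'
    · rw [pcnt_succ, if_neg (h _ (by omega) le_rfl), ih (by omega)
        (fun q hq hq2 => h q hq (by omega))]
      simp
    · have : u = p + 1 := by omega
      simp [this]

lemma mem_Des {n : ℕ} {w : Fin (2*n) → Bool} {x : ℕ} :
    x ∈ Des w ↔ (1 ≤ x ∧ x ≤ 2*n - 1) ∧ ltr w x = false ∧ ltr w (x+1) = true := by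
  simp [Des, Finset.mem_filter, Finset.mem_Icc]

lemma valley_exists {n : ℕ} (w : Fin (2*n) → Bool) {s t : ℕ} (h1 : 1 ≤ s) (hst : s < t)
    (ht2 : t ≤ 2*n) (hs : ltr w s = false) (ht : ltr w t = true) :
    ∃ j ∈ Des w, s ≤ j ∧ j < t := by
  obtain ⟨e, he⟩ : ∃ e, t - s = e := ⟨_, rfl⟩
  induction e generalizing s with
  | zero => omega
  | succ e ih =>
    by_cases hc : ltr w (s+1) = true
    · exact ⟨s, mem_Des.2 ⟨⟨h1, by omega⟩, hs, hc⟩, le_rfl, hst⟩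
    · have hs1 : ltr w (s+1) = false := by
        cases h' : ltr w (s+1) <;> simp_all
      have hne : s + 1 ≠ t := by
        rintro rfl; rw [ht] at hs1; exact Bool.noConfusion hs1
      obtain ⟨j, hj, hj2, hj3⟩ := ih (by omega) (by omega) hs1 (by omega)
      exact ⟨j, hj, by omega, hj3⟩

noncomputable def Aw (n k : ℕ) (w : Fin (2*n) → Bool) (hk : (Des w).card = k) : ℕ → ℕ :=
  fun i => if h : i < k then pcnt w true ((Des w).orderEmbOfFin hk ⟨i, h⟩) else n

noncomputable def Bw (n k : ℕ) (w : Fin (2*n) → Bool) (hk : (Des w).card = k) : ℕ → ℕ :=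
  fun i => if h : i < k then pcnt w false ((Des w).orderEmbOfFin hk ⟨i, h⟩) else n

def bpf (B : ℕ → ℕ) (i : ℕ) : ℕ := if i = 0 then 0 else B (i - 1)

lemma char {n k : ℕ} {w : Fin (2*n) → Bool} (hw : IsDyck n w) (hk : (Des w).card = k)
    {p : ℕ} (h1 : 1 ≤ p) (h2 : p ≤ 2*n) :
    ltr w p = false ↔ ∃ i ≤ k,
      Aw n k w hk i + bpf (Bw n k w hk) i < p ∧ p ≤ Aw n k w hk i + Bw n k w hk i := by
  set d := (Des w).orderEmbOfFin hk with hd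
  set A := Aw n k w hk with hA
  set B := Bw n k w hk with hB
  have hAval : ∀ (i : ℕ) (h : i < k), A i = pcnt w true (d ⟨i, h⟩) := by
    intro i h; rw [hA]; unfold Aw; rw [dif_pos h]
  have hAn : ∀ (i : ℕ), ¬ i < k → A i = n := by
    intro i h; rw [hA]; unfold Aw; rw [dif_neg h]
  have hBval : ∀ (i : ℕ) (h : i < k), B i = pcnt w false (d ⟨i, h⟩) := by
    intro i h; rw [hB]; unfold Bw; rw [dif_pos h]
  have hBn : ∀ (i : ℕ), ¬ i < k → B i = n := by
    intro i h; rw [hB]; unfold Bw; rw [dif_neg h]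
  have hdmem : ∀ i : Fin k, (1 ≤ d i ∧ d i ≤ 2*n - 1) ∧ ltr w (d i) = false ∧
      ltr w (d i + 1) = true := fun i => mem_Des.1 ((Des w).orderEmbOfFin_mem hk i)
  have hd2n : ∀ i : Fin k, d i ≤ 2*n := fun i => le_trans (hdmem i).1.2 (by omega)
  have hsurj : ∀ x ∈ Des w, ∃ i : Fin k, d i = x := by
    intro x hx
    have : x ∈ Set.range d := by rw [hd, Finset.range_orderEmbOfFin]; exact_mod_cast hx
    exact this
  have hdm : StrictMono d := ((Des w).orderEmbOfFin hk).strictMono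
  have hdmono : ∀ (i j : ℕ) (hi : i < k) (hj : j < k), i ≤ j → d ⟨i, hi⟩ ≤ d ⟨j, hj⟩ := by
    intro i j hi hj hij
    exact hdm.monotone (Fin.mk_le_mk.2 hij)
  have hptn : ∀ i, pcnt w true i ≤ n := fun i => by
    calc pcnt w true i ≤ pcnt w true (2*n) := by
          rcases le_or_gt i (2*n) with h | h
          · exact pcnt_mono w true h
          · rw [pcnt_const w true (u := 2*n) (by omega)
              (fun q hq _ => by simp [ltr, show ¬(1 ≤ q ∧ q ≤ 2*n) by omega])]
      _ = n := hw.1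
  have hpfn : ∀ i, i ≤ 2*n → pcnt w false i ≤ n :=
    fun i hi => le_trans (hw.2 i hi) (hptn i)
  -- the index j of the run containing/after p
  have hP : ∃ i, k ≤ i ∨ ∃ h : i < k, p ≤ d ⟨i, h⟩ := ⟨k, Or.inl le_rfl⟩
  set j := Nat.find hP with hjdef
  have hjk : j ≤ k := Nat.find_min' hP (Or.inl le_rfl)
  have hjlt : ∀ h : j < k, p ≤ d ⟨j, h⟩ := by
    intro h
    rcases Nat.find_spec hP with h' | ⟨h'', hp⟩
    · omega
    · exact hp
  have hilt : ∀ (i : ℕ) (hi : i < k), i < j → d ⟨i, hi⟩ < p := by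
    intro i hi hij
    have := Nat.find_min hP hij
    push_neg at this
    have := this.2 hi
    omega
  have hvalley_idx : ∀ x ∈ Des w, x < p → ∃ (i : ℕ) (hi : i < k), d ⟨i, hi⟩ = x ∧ i < j := by
    intro x hx hxp
    obtain ⟨i, hi⟩ := hsurj x hx
    refine ⟨i.val, i.isLt, by simpa using hi, ?_⟩
    by_contra hc
    push_neg at hc
    rcases Nat.lt_or_ge j k with h | h
    · have h1 : d ⟨j, h⟩ ≤ d ⟨i.val, i.isLt⟩ := hdmono _ _ _ _ hc
      have h2 := hjlt h
      simp only [Fin.eta] at h1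
      omega
    · omega
  -- valleys before p have small pcnt
  have hpcf : j = 0 → ∀ q, q < p → 1 ≤ q → q ≤ 2*n → ltr w q = false → ltr w p = true → False := by
    intro hj0 q hq h1q h2q hqf hpt
    obtain ⟨x, hx, hx1, hx2⟩ := valley_exists w h1q hq h2 hqf hpt
    obtain ⟨i, hi, hieq, hij⟩ := hvalley_idx x hx (by omega)
    omega
  constructor
  · -- h at p ⇒ p in run j
    intro hs
    have hblock : ∀ (t : ℕ), p ≤ t → t ≤ 2*n → (∀ x ∈ Des w, p ≤ x → t ≤ x) →
        (∀ q, p - 1 < q → q ≤ t → ltr w q ≠ true) := by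
      intro t hpt ht2 hsep q hq1 hq2 hqt
      rcases Nat.lt_or_ge p q with h' | h'
      · obtain ⟨x, hx, hx1, hx2⟩ := valley_exists w h1 h' (le_trans hq2 ht2) hs hqt
        have := hsep x hx hx1
        omega
      · have : q = p := by omega
        rw [this, hs] at hqt; exact Bool.noConfusion hqt
    refine ⟨j, hjk, ?_, ?_⟩
    · -- lower bound
      have hbp : bpf B j ≤ pcnt w false (p-1) := by
        unfold bpf
        split
        · omega
        · next hj0 =>
          have hj1k : j - 1 < k := by omega
          rw [hBval _ hj1k]
          exact pcnt_mono w false (by have := hilt (j-1) hj1k (by omega); omega)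
      have hAj : A j ≤ pcnt w true (p-1) := by
        rcases Nat.lt_or_ge j k with h | h
        · rw [hAval _ h]
          have heq : pcnt w true (d ⟨j, h⟩) = pcnt w true (p-1) := by
            apply pcnt_const w true (by have := hjlt h; omega)
            apply hblock (d ⟨j, h⟩) (hjlt h) (hd2n _)
            intro x hx hpx
            obtain ⟨i, hi⟩ := hsurj x hx
            rcases Nat.lt_or_ge i.val j with hij | hij
            · have := hilt i.val i.isLt hij
              simp only [Fin.eta] at this
              omega
            · have : d ⟨j, h⟩ ≤ d i := hdm.monotone (show (⟨j, h⟩ : Fin k) ≤ i from hij)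
              omega
          omega
        · rw [hAn _ (by omega)]
          have heq : pcnt w true (2*n) = pcnt w true (p-1) := by
            apply pcnt_const w true (by omega)
            apply hblock (2*n) h2 le_rfl
            intro x hx hpx
            exfalso
            obtain ⟨i, hi⟩ := hsurj x hx
            have := hilt i.val i.isLt (by omega)
            simp only [Fin.eta] at this
            omega
          rw [← heq, hw.1]
      have := pcnt_add w (p-1)
      omega
    · -- upper bound
      have hAj : pcnt w true p ≤ A j := by
        rcases Nat.lt_or_ge j k with h | h
        · rw [hAval _ h]; exact pcnt_mono w true (hjlt h)
        · rw [hAn _ (by omega)]; exact hptn p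
      have hBj : pcnt w false p ≤ B j := by
        rcases Nat.lt_or_ge j k with h | h
        · rw [hBval _ h]; exact pcnt_mono w false (hjlt h)
        · rw [hBn _ (by omega)]; exact hpfn p h2
      have := pcnt_add w p
      omega
  · -- run ⇒ h at p : contrapositive
    intro hex
    by_contra hc
    have ht : ltr w p = true := by
      cases h' : ltr w p
      · exact absurd h' hc
      · rfl
    obtain ⟨i, hik, hlo, hhi⟩ := hex
    rcases Nat.lt_or_ge i j with hij | hij
    · -- i < j : hi i = d i < p, contradiction with hhi
      have hik' : i < k := by omega
      have heq : A i + B i = d ⟨i, hik'⟩ := by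
        rw [hAval _ hik', hBval _ hik']
        exact pcnt_add w _
      have := hilt i hik' hij
      omega
    · -- i ≥ j : lo i ≥ lo j ≥ p, contradiction with hlo
      have hAmono : A j ≤ A i := by
        rcases Nat.lt_or_ge i k with h' | h'
        · rw [hAval _ h', hAval _ (by omega)]
          exact pcnt_mono w true (hdmono _ _ _ _ hij)
        · rw [hAn i (by omega)]
          rcases Nat.lt_or_ge j k with h'' | h''
          · rw [hAval j h'']; exact hptn _
          · rw [hAn j (by omega)]
      have hbpmono : bpf B j ≤ bpf B i := by
        unfold bpf
        split
        · omega
        · next hj0 =>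
          rw [if_neg (show ¬ i = 0 by omega)]
          rcases Nat.lt_or_ge (i-1) k with h' | h'
          · rw [hBval (i-1) h', hBval (j-1) (show j-1 < k by omega)]
            exact pcnt_mono w false (hdmono _ _ _ _ (by omega))
          · rw [hBn (i-1) (by omega), hBval (j-1) (show j-1 < k by omega)]
            exact hpfn _ (hd2n _)
      have hAj : pcnt w true p ≤ A j := by
        rcases Nat.lt_or_ge j k with h | h
        · rw [hAval _ h]; exact pcnt_mono w true (hjlt h)
        · rw [hAn _ (by omega)]; exact hptn p
      have hbpj : pcnt w false p ≤ bpf B j := by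
        unfold bpf
        split
        · next hj0 =>
          have : pcnt w false p = pcnt w false 0 := by
            apply pcnt_const w false (by omega)
            intro q hq1 hq2 hqf
            have hqp : q < p := by
              rcases Nat.lt_or_ge q p with h' | h'
              · exact h'
              · have : q = p := by omega
                rw [this, ht] at hqf; exact Bool.noConfusion hqf
            exact hpcf ‹j = 0› q hqp (by omega) (by omega) hqf ht
          rw [this, pcnt_zero]
        · next hj0 =>
          have hj1k : j - 1 < k := by omega
          rw [hBval _ hj1k]
          have heq : pcnt w false p = pcnt w false (d ⟨j-1, hj1k⟩) := by
            apply pcnt_const w false (by have := hilt (j-1) hj1k (by omega); omega)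
            intro q hq1 hq2 hqf
            have hqp : q < p := by
              rcases Nat.lt_or_ge q p with h' | h'
              · exact h'
              · have : q = p := by omega
                rw [this, ht] at hqf; exact Bool.noConfusion hqf
            obtain ⟨x, hx, hx1, hx2⟩ := valley_exists w (by
              have := (hdmem ⟨j-1, hj1k⟩).1.1; omega) hqp h2 hqf ht
            obtain ⟨ii, hii⟩ := hsurj x hx
            have hgt : d ⟨j-1, hj1k⟩ < d ii := by omega
            have hgt2 : (⟨j-1, hj1k⟩ : Fin k) < ii := hdm.lt_iff_lt.1 hgt
            have hge : j ≤ ii.val := by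
              rw [Fin.lt_def] at hgt2
              simp only [] at hgt2
              omega
            rcases Nat.lt_or_ge j k with hjk2 | hjk2
            · have h5 : d ⟨j, hjk2⟩ ≤ d ⟨ii.val, ii.isLt⟩ := hdmono _ _ _ _ hge
              have h6 := hjlt hjk2
              simp only [Fin.eta] at h5
              omega
            · have := ii.isLt
              omega
          omega
      have := pcnt_add w p
      omega

def extf (n k : ℕ) (f : Fin k → Fin n) (i : ℕ) : ℕ := if h : i < k then (f ⟨i, h⟩ : ℕ) else n

noncomputable def psi (n k : ℕ) (T : (Fin k → Fin n) × (Fin k → Fin n)) : Fin (2*n) → Bool :=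
  fun q => if ∃ i ≤ k, extf n k T.2 i + bpf (extf n k T.1) i < q.val + 1 ∧
      q.val + 1 ≤ extf n k T.2 i + extf n k T.1 i then false else true

section PsiSide

variable {n k : ℕ} (T : (Fin k → Fin n) × (Fin k → Fin n))
variable (hT : (∀ i j : Fin k, i < j → T.1 i < T.1 j) ∧
    (∀ i j : Fin k, i < j → T.2 i < T.2 j) ∧
    ∀ i : Fin k, 1 ≤ (T.1 i).val ∧ (T.1 i).val ≤ (T.2 i).val)

include hT

lemma extA_mono : ∀ i j : ℕ, i ≤ j → extf n k T.2 i ≤ extf n k T.2 j := by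
  intro i j hij
  unfold extf
  split
  · next hi =>
    split
    · next hj =>
      rcases Nat.lt_or_ge i j with h | h
      · exact le_of_lt (hT.2.1 ⟨i, hi⟩ ⟨j, hj⟩ h)
      · have : i = j := by omega
        subst this; exact le_rfl
    · exact le_of_lt (T.2 ⟨i, hi⟩).isLt
  · next hi =>
    rw [dif_neg (by omega)]

lemma extA_strict : ∀ i j : ℕ, i < j → j ≤ k → extf n k T.2 i < extf n k T.2 j := by
  intro i j hij hjk
  unfold extf
  rw [dif_pos (by omega)]
  split
  · next hj => exact hT.2.1 _ _ hij
  · exact (T.2 _).isLt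

lemma extB_mono : ∀ i j : ℕ, i ≤ j → extf n k T.1 i ≤ extf n k T.1 j := by
  intro i j hij
  unfold extf
  split
  · next hi =>
    split
    · next hj =>
      rcases Nat.lt_or_ge i j with h | h
      · exact le_of_lt (hT.1 ⟨i, hi⟩ ⟨j, hj⟩ h)
      · have : i = j := by omega
        subst this; exact le_rfl
    · exact le_of_lt (T.1 ⟨i, hi⟩).isLt
  · next hi =>
    rw [dif_neg (by omega)]

lemma extB_strict : ∀ i j : ℕ, i < j → j ≤ k → extf n k T.1 i < extf n k T.1 j := by
  intro i j hij hjk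
  unfold extf
  rw [dif_pos (by omega)]
  split
  · next hj => exact hT.1 _ _ hij
  · exact (T.1 _).isLt

lemma extB_le_extA : ∀ i : ℕ, extf n k T.1 i ≤ extf n k T.2 i := by
  intro i
  unfold extf
  split
  · exact (hT.2.2 _).2
  · exact le_rfl

lemma extB_pos : ∀ i : ℕ, i < k → 1 ≤ extf n k T.1 i := by
  intro i hi
  unfold extf
  rw [dif_pos hi]
  exact (hT.2.2 _).1

omit hT in
lemma extB_le_n : ∀ i : ℕ, extf n k T.1 i ≤ n := by
  intro i; unfold extf; split
  · exact le_of_lt (T.1 _).isLt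
  · exact le_rfl

omit hT in
lemma extA_le_n : ∀ i : ℕ, extf n k T.2 i ≤ n := by
  intro i; unfold extf; split
  · exact le_of_lt (T.2 _).isLt
  · exact le_rfl

lemma bpf_lt_extB : ∀ i : ℕ, i < k → bpf (extf n k T.1) i < extf n k T.1 i := by
  intro i hi
  unfold bpf
  split
  · next h => subst h; exact extB_pos T hT 0 hi
  · next h => exact extB_strict T hT (i-1) i (by omega) (by omega)

lemma bpf_mono : ∀ i j : ℕ, i ≤ j → bpf (extf n k T.1) i ≤ bpf (extf n k T.1) j := by
  intro i j hij
  unfold bpf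
  split
  · omega
  · next h =>
    rw [if_neg (show ¬ j = 0 by omega)]
    exact extB_mono T hT _ _ (by omega)

omit hT

lemma psi_letter (p : ℕ) (h1 : 1 ≤ p) (h2 : p ≤ 2*n) :
    ltr (psi n k T) p = false ↔ ∃ i ≤ k,
      extf n k T.2 i + bpf (extf n k T.1) i < p ∧ p ≤ extf n k T.2 i + extf n k T.1 i := by
  unfold ltr
  rw [dif_pos ⟨h1, h2⟩]
  unfold psi
  have hval : p - 1 + 1 = p := by omega
  constructor
  · intro h
    by_cases hE : ∃ i ≤ k, extf n k T.2 i + bpf (extf n k T.1) i < (p-1) + 1 ∧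
        (p-1) + 1 ≤ extf n k T.2 i + extf n k T.1 i
    · rw [hval] at hE; exact hE
    · rw [if_neg hE] at h; exact Bool.noConfusion h
  · intro hE
    rw [← hval] at hE
    rw [if_pos hE]

include hT in
lemma psi_pcnt : ∀ p : ℕ, p ≤ 2*n → pcnt (psi n k T) false p =
    (Finset.range (k+1)).sup fun i => min (extf n k T.1 i) (p - extf n k T.2 i) := by
  intro p
  induction p with
  | zero =>
    intro _
    rw [pcnt_zero]
    symm
    apply Nat.le_antisymm _ (Nat.zero_le _)
    apply Finset.sup_le
    intro i _
    omega
  | succ p ih =>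
    intro hp2
    rw [pcnt_succ, ih (by omega)]
    by_cases hE : ∃ i ≤ k, extf n k T.2 i + bpf (extf n k T.1) i < p + 1 ∧
        p + 1 ≤ extf n k T.2 i + extf n k T.1 i
    · rw [if_pos ((psi_letter T (p+1) (by omega) hp2).2 hE)]
      obtain ⟨j, hjk, hlo, hhi⟩ := hE
      have hAjp : extf n k T.2 j ≤ p := by omega
      have hub : ∀ q : ℕ, p ≤ q → q ≤ p + 1 → ∀ i, i < k + 1 →
          min (extf n k T.1 i) (q - extf n k T.2 i) ≤ q - extf n k T.2 j := by
        intro q hq1 hq2 i hi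
        rcases lt_trichotomy i j with h | h | h
        · have h1 : extf n k T.1 i ≤ bpf (extf n k T.1) j := by
            unfold bpf; rw [if_neg (show ¬ j = 0 by omega)]
            exact extB_mono T hT i (j-1) (by omega)
          omega
        · subst h; omega
        · have h1 : extf n k T.2 j ≤ extf n k T.2 i := extA_mono T hT j i (by omega)
          omega
      have hold : ((Finset.range (k+1)).sup fun i => min (extf n k T.1 i) (p - extf n k T.2 i))
          = p - extf n k T.2 j := by
        apply le_antisymm
        · exact Finset.sup_le fun i hi => hub p le_rfl (by omega) i (Finset.mem_range.1 hi)
        · have h9 : p - extf n k T.2 j = min (extf n k T.1 j) (p - extf n k T.2 j) := by omega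
          rw [h9]
          exact Finset.le_sup (f := fun i => min (extf n k T.1 i) (p - extf n k T.2 i))
            (Finset.mem_range.2 (by omega))
      have hnew : ((Finset.range (k+1)).sup
            fun i => min (extf n k T.1 i) (p + 1 - extf n k T.2 i))
          = p + 1 - extf n k T.2 j := by
        apply le_antisymm
        · exact Finset.sup_le fun i hi => hub (p+1) (by omega) le_rfl i (Finset.mem_range.1 hi)
        · have h9 : p + 1 - extf n k T.2 j =
              min (extf n k T.1 j) (p + 1 - extf n k T.2 j) := by omega
          rw [h9]
          exact Finset.le_sup (f := fun i => min (extf n k T.1 i) (p + 1 - extf n k T.2 i))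
            (Finset.mem_range.2 (by omega))
      rw [hold, hnew]
      omega
    · rw [if_neg (fun hlf => hE ((psi_letter T (p+1) (by omega) hp2).1 hlf)), Nat.add_zero]
      push_neg at hE
      apply le_antisymm
      · apply Finset.sup_le
        intro i hi
        have h9 : min (extf n k T.1 i) (p - extf n k T.2 i) ≤
            min (extf n k T.1 i) (p + 1 - extf n k T.2 i) := by omega
        exact le_trans h9 (Finset.le_sup
          (f := fun i => min (extf n k T.1 i) (p + 1 - extf n k T.2 i)) hi)
      · apply Finset.sup_le
        intro i hi
        rw [Finset.mem_range] at hi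
        by_cases hc1 : p + 1 ≤ extf n k T.2 i + bpf (extf n k T.1) i
        · by_cases hc0 : i = 0
          · subst hc0
            have hbpf0 : bpf (extf n k T.1) 0 = 0 := rfl
            have h9 : min (extf n k T.1 0) (p + 1 - extf n k T.2 0) = 0 := by omega
            rw [h9]
            exact Nat.zero_le _
          · have hstr : extf n k T.2 (i-1) < extf n k T.2 i :=
              extA_strict T hT (i-1) i (by omega) (by omega)
            have hbp : bpf (extf n k T.1) i = extf n k T.1 (i-1) := by
              unfold bpf; rw [if_neg hc0]
            have h9 : min (extf n k T.1 i) (p + 1 - extf n k T.2 i) ≤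
                min (extf n k T.1 (i-1)) (p - extf n k T.2 (i-1)) := by omega
            exact le_trans h9 (Finset.le_sup
              (f := fun i => min (extf n k T.1 i) (p - extf n k T.2 i))
              (Finset.mem_range.2 (by omega)))
        · have hup := hE i (by omega) (by omega)
          have h9 : min (extf n k T.1 i) (p + 1 - extf n k T.2 i) ≤
              min (extf n k T.1 i) (p - extf n k T.2 i) := by omega
          exact le_trans h9 (Finset.le_sup
            (f := fun i => min (extf n k T.1 i) (p - extf n k T.2 i))
            (Finset.mem_range.2 hi))

include hT in
lemma psi_isDyck : IsDyck n (psi n k T) := by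
  have hfull : pcnt (psi n k T) false (2*n) = n := by
    rw [psi_pcnt T hT (2*n) le_rfl]
    apply le_antisymm
    · apply Finset.sup_le
      intro i _
      have := extB_le_n (n := n) (k := k) T i
      omega
    · have hAk : extf n k T.2 k = n := dif_neg (lt_irrefl k)
      have hBk : extf n k T.1 k = n := dif_neg (lt_irrefl k)
      have h9 : n = min (extf n k T.1 k) (2*n - extf n k T.2 k) := by omega
      exact le_trans (le_of_eq h9) (Finset.le_sup
        (f := fun i => min (extf n k T.1 i) (2*n - extf n k T.2 i))
        (Finset.mem_range.2 (by omega)))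
  constructor
  · have := pcnt_add (psi n k T) (2*n); omega
  · intro i hi
    have h2 : pcnt (psi n k T) false i ≤ i / 2 := by
      rw [psi_pcnt T hT i hi]
      apply Finset.sup_le
      intro t _
      have hBA := extB_le_extA T hT t
      omega
    have := pcnt_add (psi n k T) i
    omega

include hT in
lemma psi_des : Des (psi n k T) =
    Finset.image (fun i : Fin k => ((T.2 i : ℕ) + (T.1 i : ℕ))) Finset.univ := by
  ext x
  rw [mem_Des, Finset.mem_image]
  constructor
  · rintro ⟨⟨hx1, hx2⟩, hxf, hxt⟩
    have h2n : 2 ≤ 2*n := by omega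
    obtain ⟨j, hjk, hlo, hhi⟩ := (psi_letter T x hx1 (by omega)).1 hxf
    have hnx : ¬ ∃ i ≤ k, extf n k T.2 i + bpf (extf n k T.1) i < x+1 ∧
        x+1 ≤ extf n k T.2 i + extf n k T.1 i := by
      intro hE
      have := (psi_letter T (x+1) (by omega) (by omega)).2 hE
      rw [hxt] at this; exact Bool.noConfusion this
    have hxeq : x = extf n k T.2 j + extf n k T.1 j := by
      by_contra hne
      exact hnx ⟨j, hjk, by omega, by omega⟩
    have hjlt : j < k := by
      rcases Nat.lt_or_ge j k with h | h
      · exact h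
      · exfalso
        have hA : extf n k T.2 j = n := dif_neg (by omega)
        have hB : extf n k T.1 j = n := dif_neg (by omega)
        omega
    refine ⟨⟨j, hjlt⟩, Finset.mem_univ _, ?_⟩
    rw [hxeq]
    unfold extf
    rw [dif_pos hjlt, dif_pos hjlt]
  · rintro ⟨i, -, rfl⟩
    have hAi : extf n k T.2 i.val = (T.2 i : ℕ) := by
      unfold extf; rw [dif_pos i.isLt]
    have hBi : extf n k T.1 i.val = (T.1 i : ℕ) := by
      unfold extf; rw [dif_pos i.isLt]
    have hb1 := (hT.2.2 i).1
    have hba := (hT.2.2 i).2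
    have han := (T.2 i).isLt
    have hbn := (T.1 i).isLt
    have hbpf := bpf_lt_extB T hT i.val i.isLt
    set x := (T.2 i : ℕ) + (T.1 i : ℕ) with hx
    have hx2n : x ≤ 2*n - 2 := by omega
    have hn1 : 1 ≤ n := by omega
    refine ⟨⟨by omega, by omega⟩, ?_, ?_⟩
    · apply (psi_letter T x (by omega) (by omega)).2
      exact ⟨i.val, le_of_lt i.isLt, by omega, by omega⟩
    · cases h : ltr (psi n k T) (x+1)
      · exfalso
        obtain ⟨i', hi'k, hlo', hhi'⟩ := (psi_letter T (x+1) (by omega) (by omega)).1 h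
        rcases Nat.lt_or_ge i.val i' with hc | hc
        · -- i' > i.val : lo i' ≥ x + 1
          have h1 : extf n k T.2 i.val < extf n k T.2 (i.val+1) :=
            extA_strict T hT _ _ (by omega) (by omega)
          have h2 : extf n k T.2 (i.val+1) ≤ extf n k T.2 i' := extA_mono T hT _ _ (by omega)
          have h3 : bpf (extf n k T.1) (i.val+1) ≤ bpf (extf n k T.1) i' :=
            bpf_mono T hT _ _ (by omega)
          have h4 : bpf (extf n k T.1) (i.val+1) = extf n k T.1 i.val := by
            unfold bpf; rw [if_neg (by omega)]; simp
          omega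
        · -- i' ≤ i.val : hi i' ≤ x
          have h1 : extf n k T.2 i' ≤ extf n k T.2 i.val := extA_mono T hT _ _ hc
          have h2 : extf n k T.1 i' ≤ extf n k T.1 i.val := extB_mono T hT _ _ hc
          omega
      · rfl

include hT in
lemma psi_des_card : (Des (psi n k T)).card = k := by
  rw [psi_des T hT]
  rw [Finset.card_image_of_injective _ (fun i j hij => by
    by_contra hne
    rcases lt_or_gt_of_ne hne with h | h
    · have h1 := hT.1 i j h; have h2 := hT.2.1 i j h
      rw [Fin.lt_def] at h1 h2
      omega
    · have h1 := hT.1 j i h; have h2 := hT.2.1 j i h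
      rw [Fin.lt_def] at h1 h2
      omega)]
  rw [Finset.card_univ, Fintype.card_fin]

include hT in
lemma psi_pcnt_valley (i : Fin k) :
    pcnt (psi n k T) false ((T.2 i : ℕ) + (T.1 i : ℕ)) = (T.1 i : ℕ) := by
  have han := (T.2 i).isLt
  have hbn := (T.1 i).isLt
  have hx2 : (T.2 i : ℕ) + (T.1 i : ℕ) ≤ 2*n := by omega
  have hAi : extf n k T.2 i.val = (T.2 i : ℕ) := by
    unfold extf; rw [dif_pos i.isLt]
  have hBi : extf n k T.1 i.val = (T.1 i : ℕ) := by
    unfold extf; rw [dif_pos i.isLt]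
  rw [psi_pcnt T hT _ hx2]
  apply le_antisymm
  · apply Finset.sup_le
    intro i' hi'
    rw [Finset.mem_range] at hi'
    rcases Nat.lt_or_ge i' (i.val+1) with h | h
    · have : extf n k T.1 i' ≤ extf n k T.1 i.val := extB_mono T hT _ _ (by omega)
      omega
    · have h1 : extf n k T.2 i.val < extf n k T.2 (i.val+1) :=
        extA_strict T hT _ _ (by omega) (by omega)
      have h2 : extf n k T.2 (i.val+1) ≤ extf n k T.2 i' := extA_mono T hT _ _ h
      omega
  · have h9 : (T.1 i : ℕ) = min (extf n k T.1 i.val)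
        ((T.2 i : ℕ) + (T.1 i : ℕ) - extf n k T.2 i.val) := by omega
    exact le_trans (le_of_eq h9) (Finset.le_sup
      (f := fun i' => min (extf n k T.1 i')
        ((T.2 i : ℕ) + (T.1 i : ℕ) - extf n k T.2 i'))
      (Finset.mem_range.2 (by omega)))

end PsiSide

section Forward

variable {n k : ℕ} {w : Fin (2*n) → Bool} (hw : IsDyck n w) (hk : (Des w).card = k)

include hw

lemma fwd_true_lt (i : Fin k) : pcnt w true ((Des w).orderEmbOfFin hk i) < n := by
  set x := (Des w).orderEmbOfFin hk i with hx
  obtain ⟨⟨h1, h2⟩, hf, ht⟩ := mem_Des.1 ((Des w).orderEmbOfFin_mem hk i)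
  have hsucc : pcnt w true (x + 1 - 1) + 1 = pcnt w true (x+1) :=
    pcnt_strict w true (by omega) ht
  simp only [Nat.add_sub_cancel] at hsucc
  have hmono : pcnt w true (x+1) ≤ pcnt w true (2*n) := pcnt_mono w true (by omega)
  rw [hw.1] at hmono
  omega

lemma fwd_false_lt (i : Fin k) : pcnt w false ((Des w).orderEmbOfFin hk i) < n := by
  have h1 := fwd_true_lt hw hk i
  obtain ⟨⟨ha, hb⟩, -, -⟩ := mem_Des.1 ((Des w).orderEmbOfFin_mem hk i)
  have := hw.2 ((Des w).orderEmbOfFin hk i) (by omega)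
  omega

omit hw

lemma fwd_false_pos (i : Fin k) : 1 ≤ pcnt w false ((Des w).orderEmbOfFin hk i) := by
  obtain ⟨⟨h1, h2⟩, hf, ht⟩ := mem_Des.1 ((Des w).orderEmbOfFin_mem hk i)
  have := pcnt_strict w false h1 hf
  omega

lemma fwd_false_strict {i j : Fin k} (hij : i < j) :
    pcnt w false ((Des w).orderEmbOfFin hk i) < pcnt w false ((Des w).orderEmbOfFin hk j) := by
  have hd := ((Des w).orderEmbOfFin hk).strictMono hij
  obtain ⟨⟨h1, h2⟩, hf, ht⟩ := mem_Des.1 ((Des w).orderEmbOfFin_mem hk j)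
  have hs := pcnt_strict w false h1 hf
  have := pcnt_mono w false (show (Des w).orderEmbOfFin hk i ≤ ((Des w).orderEmbOfFin hk) j - 1
    by omega)
  omega

lemma fwd_true_strict {i j : Fin k} (hij : i < j) :
    pcnt w true ((Des w).orderEmbOfFin hk i) < pcnt w true ((Des w).orderEmbOfFin hk j) := by
  have hd := ((Des w).orderEmbOfFin hk).strictMono hij
  obtain ⟨⟨h1, h2⟩, hf, ht⟩ := mem_Des.1 ((Des w).orderEmbOfFin_mem hk i)
  have hs : pcnt w true ((Des w).orderEmbOfFin hk i + 1 - 1) + 1 =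
      pcnt w true ((Des w).orderEmbOfFin hk i + 1) := pcnt_strict w true (by omega) ht
  simp only [Nat.add_sub_cancel] at hs
  have := pcnt_mono w true (show (Des w).orderEmbOfFin hk i + 1 ≤ ((Des w).orderEmbOfFin hk) j
    by omega)
  omega

lemma maj_eq : ∑ x ∈ Des w, x = ∑ i : Fin k,
    (pcnt w false ((Des w).orderEmbOfFin hk i) + pcnt w true ((Des w).orderEmbOfFin hk i)) := by
  have himg : Des w = Finset.image (fun i : Fin k => (Des w).orderEmbOfFin hk i)
      Finset.univ := by
    ext x
    simp only [Finset.mem_image, Finset.mem_univ, true_and]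
    constructor
    · intro hx
      have : x ∈ Set.range ((Des w).orderEmbOfFin hk) := by
        rw [Finset.range_orderEmbOfFin]; exact_mod_cast hx
      exact this
    · rintro ⟨i, rfl⟩
      exact Finset.orderEmbOfFin_mem _ _ _
  conv_lhs => rw [himg]
  rw [Finset.sum_image (fun i _ j _ h => ((Des w).orderEmbOfFin hk).injective h)]
  apply Finset.sum_congr rfl
  intro i _
  have := pcnt_add w ((Des w).orderEmbOfFin hk i)
  omega

end Forward

noncomputable def phi (n k : ℕ) (w : Fin (2*n) → Bool) (hw : IsDyck n w)
    (hk : (Des w).card = k) : (Fin k → Fin n) × (Fin k → Fin n) :=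
  (fun i => ⟨pcnt w false ((Des w).orderEmbOfFin hk i), fwd_false_lt hw hk i⟩,
   fun i => ⟨pcnt w true ((Des w).orderEmbOfFin hk i), fwd_true_lt hw hk i⟩)

lemma psi_phi {n k : ℕ} {w : Fin (2*n) → Bool} (hw : IsDyck n w) (hk : (Des w).card = k) :
    psi n k (phi n k w hw hk) = w := by
  funext q
  have hq1 : 1 ≤ q.val + 1 := by omega
  have hq2 : q.val + 1 ≤ 2*n := by have := q.isLt; omega
  have hchar := char hw hk hq1 hq2
  have hExt2 : extf n k (phi n k w hw hk).2 = Aw n k w hk := by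
    funext i; unfold extf phi Aw; split <;> rfl
  have hExt1 : extf n k (phi n k w hw hk).1 = Bw n k w hk := by
    funext i; unfold extf phi Bw; split <;> rfl
  have hwq : ltr w (q.val+1) = w q := by
    unfold ltr
    rw [dif_pos ⟨hq1, hq2⟩]
    exact congrArg w (Fin.ext (by simp))
  unfold psi
  rw [hExt1, hExt2]
  by_cases hE : ∃ i ≤ k, Aw n k w hk i + bpf (Bw n k w hk) i < q.val+1 ∧
      q.val+1 ≤ Aw n k w hk i + Bw n k w hk i
  · rw [if_pos hE, ← hwq]
    exact (hchar.2 hE).symm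
  · rw [if_neg hE, ← hwq]
    cases h' : ltr w (q.val+1)
    · exact absurd (hchar.1 h') hE
    · rfl

lemma phi_psi {n k : ℕ} (T : (Fin k → Fin n) × (Fin k → Fin n))
    (hT : (∀ i j : Fin k, i < j → T.1 i < T.1 j) ∧
      (∀ i j : Fin k, i < j → T.2 i < T.2 j) ∧
      ∀ i : Fin k, 1 ≤ (T.1 i).val ∧ (T.1 i).val ≤ (T.2 i).val)
    (hd : IsDyck n (psi n k T)) (hc : (Des (psi n k T)).card = k) :
    phi n k (psi n k T) hd hc = T := by
  have hemb : ∀ i : Fin k, (Des (psi n k T)).orderEmbOfFin hc i = (T.2 i : ℕ) + (T.1 i : ℕ) := by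
    have huniq := Finset.orderEmbOfFin_unique hc
      (f := fun i : Fin k => (T.2 i : ℕ) + (T.1 i : ℕ))
      (fun i => by rw [psi_des T hT]; exact Finset.mem_image_of_mem _ (Finset.mem_univ i))
      (fun i j hij => by
        have h1 := hT.1 i j hij; have h2 := hT.2.1 i j hij
        rw [Fin.lt_def] at h1 h2
        show (T.2 i : ℕ) + (T.1 i : ℕ) < (T.2 j : ℕ) + (T.1 j : ℕ)
        omega)
    intro i
    exact (congrFun huniq i).symm
  have hval : ∀ i : Fin k, pcnt (psi n k T) false ((Des (psi n k T)).orderEmbOfFin hc i)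
      = (T.1 i : ℕ) := by
    intro i
    rw [hemb i]
    exact psi_pcnt_valley T hT i
  have hval2 : ∀ i : Fin k, pcnt (psi n k T) true ((Des (psi n k T)).orderEmbOfFin hc i)
      = (T.2 i : ℕ) := by
    intro i
    have h1 := pcnt_add (psi n k T) ((Des (psi n k T)).orderEmbOfFin hc i)
    have h2 := hval i
    have h3 := hemb i
    omega
  unfold phi
  apply Prod.ext
  · funext i
    exact Fin.ext (hval i)
  · funext i
    exact Fin.ext (hval2 i)

/-- The `q`-Narayana number `N_q(n,k) = Σ_{w ∈ 𝒟_n, des w = k} q^(maj w)` equals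
the Schur polynomial `s_⟨2^k⟩(q, q², …, q^(n-1))`, written as the generating
function of SSYT of shape `⟨2^k⟩` with entries in `{1, …, n-1}` (encoded by the
two strictly increasing columns `T.1 ≤ T.2` with values in `Fin n`, positive). -/
theorem qNarayana_eq_schur (n k : ℕ) :
    ∑ w ∈ Finset.univ.filter
        (fun w : Fin (2 * n) → Bool => IsDyck n w ∧ (Des w).card = k),
        (Polynomial.X : Polynomial ℤ) ^ (∑ i ∈ Des w, i) =
      ∑ T ∈ Finset.univ.filter
          (fun T : (Fin k → Fin n) × (Fin k → Fin n) =>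
            (∀ i j : Fin k, i < j → T.1 i < T.1 j) ∧
            (∀ i j : Fin k, i < j → T.2 i < T.2 j) ∧
            ∀ i : Fin k, 1 ≤ (T.1 i).val ∧ (T.1 i).val ≤ (T.2 i).val),
        (Polynomial.X : Polynomial ℤ) ^ (∑ i : Fin k, ((T.1 i).val + (T.2 i).val)) := by
  refine Finset.sum_bij'
    (fun w hw => phi n k w (Finset.mem_filter.1 hw).2.1 (Finset.mem_filter.1 hw).2.2)
    (fun T _ => psi n k T) ?_ ?_ ?_ ?_ ?_
  · intro w hw
    obtain ⟨-, hd, hc⟩ := Finset.mem_filter.1 hw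
    rw [Finset.mem_filter]
    refine ⟨Finset.mem_univ _, ?_, ?_, ?_⟩
    · intro i j hij
      rw [Fin.lt_def]
      exact fwd_false_strict hc hij
    · intro i j hij
      rw [Fin.lt_def]
      exact fwd_true_strict hc hij
    · intro i
      refine ⟨fwd_false_pos hc i, ?_⟩
      obtain ⟨⟨h1, h2⟩, -, -⟩ := mem_Des.1 ((Des w).orderEmbOfFin_mem hc i)
      exact hd.2 _ (by omega)
  · intro T hT
    obtain ⟨-, hT'⟩ := Finset.mem_filter.1 hT
    exact Finset.mem_filter.2 ⟨Finset.mem_univ _, psi_isDyck T hT', psi_des_card T hT'⟩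
  · intro w hw
    exact psi_phi _ _
  · intro T hT
    obtain ⟨-, hT'⟩ := Finset.mem_filter.1 hT
    exact phi_psi T hT' _ _
  · intro w hw
    obtain ⟨-, hd, hc⟩ := Finset.mem_filter.1 hw
    congr 1
    rw [maj_eq hc]
    exact Finset.sum_congr rfl fun i _ => rfl
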